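/- Let k ≥ 2 and let D be a balanced set of 2k positive integers with d = max D and d' = max(D∖{d}). Then C(D) is a 2k-cycle: its vertices c_0, c_1, …, c_{2k−1} are pairwise distinct integers all lying in the integer interval [−d, d'], and the multiset of values |c_i − c_{i+1}| over the edges of the cycle C(D) (indices mod 2k) equals D (each element of D occurring exactly once). -/

import Mathlib

private lemma teleSum (f : ℕ → ℤ) (a b : ℕ) (h : a ≤ b) :
    ∑ i ∈ Finset.Ioc a b, (f (i+1) - f i) = f (b+1) - f (a+1) := by
  induction b, h using Nat.le_induction with
  | base => simp
  | succ n hn ih =>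
      rw [Finset.sum_Ioc_succ_top (by omega), ih]
      ring

private lemma pairSum (f : ℕ → ℤ) (m : ℕ) :
    ∑ h ∈ Finset.Icc 1 (2*m), (-1:ℤ)^h * f h
      = ∑ i ∈ Finset.Icc 1 m, (f (2*i) - f (2*i-1)) := by
  induction m with
  | zero => simp
  | succ m ih =>
      rw [show 2*(m+1) = (2*m+1)+1 from by ring]
      rw [Finset.sum_Icc_succ_top (show 1 ≤ (2*m+1)+1 by omega) (fun h => (-1:ℤ)^h * f h)]
      rw [Finset.sum_Icc_succ_top (show 1 ≤ (2*m)+1 by omega) (fun h => (-1:ℤ)^h * f h)]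
      rw [ih]
      rw [Finset.sum_Icc_succ_top (show 1 ≤ m+1 by omega) (fun i => f (2*i) - f (2*i-1))]
      have h1 : (-1:ℤ)^(2*m+1) = -1 := by rw [pow_succ, pow_mul]; norm_num
      have h2 : (-1:ℤ)^(2*m+1+1) = 1 := by rw [show 2*m+1+1 = 2*(m+1) from by ring, pow_mul]; norm_num
      rw [h1, h2, show 2*(m+1) = 2*m+1+1 from by ring,
        show 2*m+1+1-1 = 2*m+1 from by omega]
      ring



/-- The `i`-th smallest element of a finite set of naturals (1-indexed). -/
def nth (D : Finset ℕ) (i : ℕ) : ℕ := (D.sort (· ≤ ·)).getD (i - 1) 0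

/-- `D` (of size `2k`, enumerated increasingly as `d_1 < d_2 < … < d_{2k}`) is balanced
with parameter `τ ∈ [1,k]`: `∑_{i=1}^{τ} (d_{2i} - d_{2i-1}) = ∑_{i=τ+1}^{k} (d_{2i} - d_{2i-1})`. -/
def IsBalancedWith (k : ℕ) (D : Finset ℕ) (τ : ℕ) : Prop :=
  1 ≤ τ ∧ τ ≤ k ∧
    ∑ i ∈ Finset.Icc 1 τ, ((nth D (2 * i) : ℤ) - (nth D (2 * i - 1) : ℤ)) =
      ∑ i ∈ Finset.Icc (τ + 1) k, ((nth D (2 * i) : ℤ) - (nth D (2 * i - 1) : ℤ))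

/-- The reordered sequence `δ_1, …, δ_{2k}` of the balanced set `D` (1-indexed):
`δ_i = d_i` for `i ≤ 2τ-1`, `δ_i = d_{i+1}` for `2τ ≤ i ≤ 2k-1`, and `δ_{2k} = d_{2τ}`. -/
def deltaSeq (k : ℕ) (D : Finset ℕ) (τ : ℕ) (i : ℕ) : ℕ :=
  if i ≤ 2 * τ - 1 then nth D i
  else if i ≤ 2 * k - 1 then nth D (i + 1)
  else nth D (2 * τ)

/-- The vertices of `C(D)`: `c_0 = 0` and `c_i = ∑_{h=1}^{i} (-1)^h δ_h`. -/
def partialC (k : ℕ) (D : Finset ℕ) (τ : ℕ) (i : ℕ) : ℤ :=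
  ∑ h ∈ Finset.Icc 1 i, (-1 : ℤ) ^ h * (deltaSeq k D τ h : ℤ)

/-- Lemma: if `k ≥ 2` and `D` is a balanced set of `2k` positive integers (with balance
parameter `τ`), then the vertices `c_0, …, c_{2k-1}` of `C(D)` are pairwise distinct
integers lying in `[-d, d']`, where `d = d_{2k} = max D` and `d' = d_{2k-1} = max (D \ {d})`,
and the multiset `{|c_i - c_{i+1 mod 2k}| : 0 ≤ i ≤ 2k-1}` of differences of the edges of
`C(D)` equals `D` (each element of `D` occurring exactly once). -/
theorem stmt_2 (k : ℕ) (hk : 2 ≤ k) (D : Finset ℕ) (hcard : D.card = 2 * k)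
    (hpos : ∀ x ∈ D, 0 < x) (τ : ℕ) (hτ : IsBalancedWith k D τ) :
    (∀ i j, i < 2 * k → j < 2 * k → i ≠ j → partialC k D τ i ≠ partialC k D τ j) ∧
    (∀ i, i < 2 * k →
      -(nth D (2 * k) : ℤ) ≤ partialC k D τ i ∧ partialC k D τ i ≤ (nth D (2 * k - 1) : ℤ)) ∧
    (Multiset.map
        (fun i => (partialC k D τ i - partialC k D τ ((i + 1) % (2 * k))).natAbs)
        (Multiset.range (2 * k)) = D.val) := by
  obtain ⟨hτ1, hτk, hbal⟩ := hτ
  have hlen : (D.sort (· ≤ ·)).length = 2*k := by rw [Finset.length_sort, hcard]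
  -- basic nth facts
  have hnth_lt : ∀ i j, 1 ≤ i → i < j → j ≤ 2*k → nth D i < nth D j := by
    intro i j h1 h2 h3
    have hi : i - 1 < (D.sort (· ≤ ·)).length := by omega
    have hj : j - 1 < (D.sort (· ≤ ·)).length := by omega
    have hs := List.pairwise_iff_getElem.mp (Finset.sortedLT_sort D).pairwise (i-1) (j-1) hi hj (by omega)
    unfold nth
    rw [List.getD_eq_getElem _ _ hi, List.getD_eq_getElem _ _ hj]
    exact hs
  have hnth_le : ∀ i j, 1 ≤ i → i ≤ j → j ≤ 2*k → nth D i ≤ nth D j := by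
    intro i j h1 h2 h3
    rcases eq_or_lt_of_le h2 with h|h
    · rw [h]
    · exact (hnth_lt i j h1 h h3).le
  have hnth_mem : ∀ i, 1 ≤ i → i ≤ 2*k → nth D i ∈ D := by
    intro i h1 h2
    have hi : i - 1 < (D.sort (· ≤ ·)).length := by omega
    unfold nth
    rw [List.getD_eq_getElem _ _ hi]
    exact (Finset.mem_sort _).mp (List.getElem_mem hi)
  have hnth_pos : ∀ i, 1 ≤ i → i ≤ 2*k → 0 < nth D i := fun i h1 h2 => hpos _ (hnth_mem i h1 h2)
  -- τ < k
  have hτk' : τ < k := by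
    rcases eq_or_lt_of_le hτk with h|h
    · exfalso
      rw [Finset.Icc_eq_empty (a := τ+1) (b := k) (by omega), Finset.sum_empty] at hbal
      have hposum : (0:ℤ) < ∑ i ∈ Finset.Icc 1 τ, ((nth D (2*i) : ℤ) - (nth D (2*i-1) : ℤ)) := by
        apply Finset.sum_pos
        · intro i hi
          rw [Finset.mem_Icc] at hi
          have h5 := hnth_lt (2*i-1) (2*i) (by omega) (by omega) (by omega)
          have h6 : ((nth D (2*i-1) : ℤ)) < ((nth D (2*i) : ℤ)) := by exact_mod_cast h5
          linarith
        · exact ⟨τ, by rw [Finset.mem_Icc]; omega⟩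
      linarith
    · exact h
  -- delta facts
  have hδ1 : ∀ i, i ≤ 2*τ-1 → deltaSeq k D τ i = nth D i := by
    intro i h; unfold deltaSeq; rw [if_pos h]
  have hδ2 : ∀ i, 2*τ ≤ i → i ≤ 2*k-1 → deltaSeq k D τ i = nth D (i+1) := by
    intro i h h'; unfold deltaSeq; rw [if_neg (by omega), if_pos h']
  have hδ3 : deltaSeq k D τ (2*k) = nth D (2*τ) := by
    unfold deltaSeq; rw [if_neg (by omega), if_neg (by omega)]
  have hδmono : ∀ i j, 1 ≤ i → i < j → j ≤ 2*k-1 → deltaSeq k D τ i < deltaSeq k D τ j := by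
    intro i j h1 h2 h3
    by_cases hi : i ≤ 2*τ-1 <;> by_cases hj : j ≤ 2*τ-1
    · rw [hδ1 i hi, hδ1 j hj]; exact hnth_lt i j h1 h2 (by omega)
    · rw [hδ1 i hi, hδ2 j (by omega) h3]; exact hnth_lt i (j+1) h1 (by omega) (by omega)
    · omega
    · rw [hδ2 i (by omega) (by omega), hδ2 j (by omega) h3]
      exact hnth_lt (i+1) (j+1) (by omega) (by omega) (by omega)
  have hδpos : ∀ i, 1 ≤ i → i ≤ 2*k → 0 < deltaSeq k D τ i := by
    intro i h1 h2
    by_cases hi : i ≤ 2*τ-1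
    · rw [hδ1 i hi]; exact hnth_pos i h1 (by omega)
    · by_cases hi2 : i ≤ 2*k-1
      · rw [hδ2 i (by omega) hi2]; exact hnth_pos (i+1) (by omega) (by omega)
      · rw [show i = 2*k from by omega, hδ3]; exact hnth_pos (2*τ) (by omega) (by omega)
  have hδle_d : ∀ i, 1 ≤ i → i ≤ 2*k → deltaSeq k D τ i ≤ nth D (2*k) := by
    intro i h1 h2
    by_cases hi : i ≤ 2*τ-1
    · rw [hδ1 i hi]; exact hnth_le i (2*k) h1 (by omega) (by omega)
    · by_cases hi2 : i ≤ 2*k-1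
      · rw [hδ2 i (by omega) hi2]; exact hnth_le (i+1) (2*k) (by omega) (by omega) (by omega)
      · rw [show i = 2*k from by omega, hδ3]
        exact hnth_le (2*τ) (2*k) (by omega) (by omega) (by omega)
  have hδle_d' : ∀ i, 1 ≤ i → i ≤ 2*k-2 → deltaSeq k D τ i ≤ nth D (2*k-1) := by
    intro i h1 h2
    by_cases hi : i ≤ 2*τ-1
    · rw [hδ1 i hi]; exact hnth_le i (2*k-1) h1 (by omega) (by omega)
    · rw [hδ2 i (by omega) (by omega)]
      exact hnth_le (i+1) (2*k-1) (by omega) (by omega) (by omega)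
  -- recurrences
  have hc0 : partialC k D τ 0 = 0 := by unfold partialC; simp
  have hcs : ∀ i, partialC k D τ (i+1)
      = partialC k D τ i + (-1:ℤ)^(i+1) * (deltaSeq k D τ (i+1) : ℤ) := by
    intro i; unfold partialC
    exact Finset.sum_Icc_succ_top (by omega) _
  have hcodd : ∀ j, partialC k D τ (2*j+1)
      = partialC k D τ (2*j) - (deltaSeq k D τ (2*j+1) : ℤ) := by
    intro j
    have h1 : (-1:ℤ)^(2*j+1) = -1 := by rw [pow_succ, pow_mul]; norm_num
    rw [hcs (2*j), h1]; ring
  have hceven : ∀ j, partialC k D τ (2*j+2)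
      = partialC k D τ (2*j+1) + (deltaSeq k D τ (2*j+2) : ℤ) := by
    intro j
    have h1 : (-1:ℤ)^(2*j+1+1) = 1 := by
      rw [show 2*j+1+1 = 2*(j+1) from by ring, pow_mul]; norm_num
    rw [show 2*j+2 = (2*j+1)+1 from rfl, hcs (2*j+1), h1]; ring
  -- key induction
  have key : ∀ j, j ≤ k-1 →
      (0 ≤ partialC k D τ (2*j)) ∧ (partialC k D τ (2*j+1) < 0) ∧
      (-(deltaSeq k D τ (2*j+1) : ℤ) ≤ partialC k D τ (2*j+1)) ∧
      (1 ≤ j → partialC k D τ (2*j) ≤ (deltaSeq k D τ (2*j) : ℤ)) := by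
    intro j
    induction j with
    | zero =>
        intro _
        simp only [Nat.mul_zero, Nat.zero_add, hc0]
        have e := hcodd 0
        simp only [Nat.mul_zero, Nat.zero_add, hc0] at e
        have hp : 0 < deltaSeq k D τ 1 := hδpos 1 (by omega) (by omega)
        have hp' : (0:ℤ) < (deltaSeq k D τ 1 : ℤ) := by exact_mod_cast hp
        refine ⟨le_refl 0, by rw [e]; linarith, by rw [e]; linarith, by omega⟩
    | succ j ih =>
        intro hj1
        obtain ⟨h0, h1, h2, _⟩ := ih (by omega)
        have e : partialC k D τ (2*(j+1))
            = partialC k D τ (2*j+1) + (deltaSeq k D τ (2*j+2) : ℤ) := by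
          rw [show 2*(j+1) = 2*j+2 from by ring]; exact hceven j
        have emono : deltaSeq k D τ (2*j+1) < deltaSeq k D τ (2*j+2) :=
          hδmono _ _ (by omega) (by omega) (by omega)
        have emono' : ((deltaSeq k D τ (2*j+1) : ℕ) : ℤ) < (deltaSeq k D τ (2*j+2) : ℤ) := by
          exact_mod_cast emono
        have h4 : partialC k D τ (2*(j+1)) ≤ (deltaSeq k D τ (2*(j+1)) : ℤ) := by
          rw [e, show 2*(j+1) = 2*j+2 from by ring]; linarith
        have e2 : partialC k D τ (2*(j+1)+1)
            = partialC k D τ (2*(j+1)) - (deltaSeq k D τ (2*(j+1)+1) : ℤ) := hcodd (j+1)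
        have emono2 : deltaSeq k D τ (2*(j+1)) < deltaSeq k D τ (2*(j+1)+1) :=
          hδmono _ _ (by omega) (by omega) (by omega)
        have emono2' : ((deltaSeq k D τ (2*(j+1)) : ℕ) : ℤ) < (deltaSeq k D τ (2*(j+1)+1) : ℤ) := by
          exact_mod_cast emono2
        have hnn : (0:ℤ) ≤ partialC k D τ (2*(j+1)) := by rw [e]; linarith
        refine ⟨hnn, by rw [e2]; linarith, by rw [e2]; linarith, fun _ => h4⟩
  -- strict monotonicity of evens / antitonicity of odds
  have hEstep : ∀ j, j+1 ≤ k-1 → partialC k D τ (2*j) < partialC k D τ (2*(j+1)) := by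
    intro j hj
    have e1 := hcodd j
    have e2 : partialC k D τ (2*(j+1))
        = partialC k D τ (2*j+1) + (deltaSeq k D τ (2*j+2) : ℤ) := by
      rw [show 2*(j+1) = 2*j+2 from by ring]; exact hceven j
    have emono : deltaSeq k D τ (2*j+1) < deltaSeq k D τ (2*j+2) :=
      hδmono _ _ (by omega) (by omega) (by omega)
    have emono' : ((deltaSeq k D τ (2*j+1) : ℕ) : ℤ) < (deltaSeq k D τ (2*j+2) : ℤ) := by
      exact_mod_cast emono
    linarith [e1, e2]
  have hOstep : ∀ j, j+1 ≤ k-1 → partialC k D τ (2*(j+1)+1) < partialC k D τ (2*j+1) := by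
    intro j hj
    have e2 : partialC k D τ (2*(j+1))
        = partialC k D τ (2*j+1) + (deltaSeq k D τ (2*j+2) : ℤ) := by
      rw [show 2*(j+1) = 2*j+2 from by ring]; exact hceven j
    have e3 := hcodd (j+1)
    have emono : deltaSeq k D τ (2*(j+1)) < deltaSeq k D τ (2*(j+1)+1) :=
      hδmono _ _ (by omega) (by omega) (by omega)
    have emono' : ((deltaSeq k D τ (2*(j+1)) : ℕ) : ℤ) < (deltaSeq k D τ (2*(j+1)+1) : ℤ) := by
      exact_mod_cast emono
    have e2' : partialC k D τ (2*(j+1))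
        = partialC k D τ (2*j+1) + ((deltaSeq k D τ (2*(j+1)) : ℕ) : ℤ) := by
      rw [show 2*(j+1) = 2*j+2 from by ring] at *; exact e2
    linarith [e3, e2']
  have hE : ∀ a b, a < b → b ≤ k-1 → partialC k D τ (2*a) < partialC k D τ (2*b) := by
    intro a b hab hb
    induction b with
    | zero => omega
    | succ b ih =>
        rcases Nat.lt_succ_iff_lt_or_eq.mp hab with h|h
        · exact lt_trans (ih h (by omega)) (hEstep b hb)
        · subst h; exact hEstep a hb
  have hO : ∀ a b, a < b → b ≤ k-1 → partialC k D τ (2*b+1) < partialC k D τ (2*a+1) := by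
    intro a b hab hb
    induction b with
    | zero => omega
    | succ b ih =>
        rcases Nat.lt_succ_iff_lt_or_eq.mp hab with h|h
        · exact lt_trans (hOstep b hb) (ih h (by omega))
        · subst h; exact hOstep a hb
  -- distinctness
  have hdist : ∀ i j, i < 2*k → j < 2*k → i ≠ j → partialC k D τ i ≠ partialC k D τ j := by
    have main : ∀ i j, i < j → j < 2*k → partialC k D τ i ≠ partialC k D τ j := by
      intro i j hij hj
      rcases Nat.even_or_odd i with ⟨a, ha⟩ | ⟨a, ha⟩ <;>
        rcases Nat.even_or_odd j with ⟨b, hb⟩ | ⟨b, hb⟩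
      · have hia : i = 2*a := by omega
        have hjb : j = 2*b := by omega
        subst hia; subst hjb
        exact ne_of_lt (hE a b (by omega) (by omega))
      · have hia : i = 2*a := by omega
        have hjb : j = 2*b+1 := by omega
        subst hia; subst hjb
        have g1 := (key a (by omega)).1
        have g2 := (key b (by omega)).2.1
        intro heq; rw [heq] at g1; linarith
      · have hia : i = 2*a+1 := by omega
        have hjb : j = 2*b := by omega
        subst hia; subst hjb
        have g1 := (key a (by omega)).2.1
        have g2 := (key b (by omega)).1
        intro heq; rw [heq] at g1; linarith
      · have hia : i = 2*a+1 := by omega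
        have hjb : j = 2*b+1 := by omega
        subst hia; subst hjb
        exact ne_of_gt (hO a b (by omega) (by omega))
    intro i j hi hj hne
    rcases lt_or_gt_of_ne hne with h|h
    · exact main i j h hj
    · exact (main j i h hi).symm
  -- bounds
  have hbound : ∀ i, i < 2*k →
      -(nth D (2*k) : ℤ) ≤ partialC k D τ i ∧ partialC k D τ i ≤ (nth D (2*k-1) : ℤ) := by
    intro i hi
    have hd2k : (0:ℤ) ≤ (nth D (2*k) : ℤ) := Int.natCast_nonneg _
    have hd2k1 : (0:ℤ) ≤ (nth D (2*k-1) : ℤ) := Int.natCast_nonneg _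
    rcases Nat.even_or_odd i with ⟨a, ha⟩ | ⟨a, ha⟩
    · have hia : i = 2*a := by omega
      subst hia
      obtain ⟨h0, _, _, h4⟩ := key a (by omega)
      constructor
      · linarith
      · rcases Nat.eq_zero_or_pos a with h|h
        · subst h
          simp only [Nat.mul_zero, hc0]
          exact hd2k1
        · have h4' := h4 h
          have h5 : deltaSeq k D τ (2*a) ≤ nth D (2*k-1) := hδle_d' _ (by omega) (by omega)
          have h5' : ((deltaSeq k D τ (2*a) : ℕ) : ℤ) ≤ (nth D (2*k-1) : ℤ) := by
            exact_mod_cast h5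
          linarith
    · have hia : i = 2*a+1 := by omega
      subst hia
      obtain ⟨_, h1, h2, _⟩ := key a (by omega)
      constructor
      · have h5 : deltaSeq k D τ (2*a+1) ≤ nth D (2*k) := hδle_d _ (by omega) (by omega)
        have h5' : ((deltaSeq k D τ (2*a+1) : ℕ) : ℤ) ≤ (nth D (2*k) : ℤ) := by exact_mod_cast h5
        linarith
      · linarith
  -- balance computation: c_{2k} = 0
  have h_pair : partialC k D τ (2*k)
      = ∑ i ∈ Finset.Icc 1 k, ((deltaSeq k D τ (2*i) : ℤ) - (deltaSeq k D τ (2*i-1) : ℤ)) := by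
    unfold partialC
    exact pairSum (fun h => ((deltaSeq k D τ h : ℕ) : ℤ)) k
  have hIoc1 : ∀ n : ℕ, Finset.Icc 1 n = Finset.Ioc 0 n := fun n => Finset.Icc_add_one_left_eq_Ioc 0 n
  have hIoc2 : Finset.Icc (τ+1) k = Finset.Ioc τ k := Finset.Icc_add_one_left_eq_Ioc τ k
  have hsplitG :
      ∑ i ∈ Finset.Ioc 0 τ, ((deltaSeq k D τ (2*i) : ℤ) - (deltaSeq k D τ (2*i-1) : ℤ))
        + ∑ i ∈ Finset.Ioc τ k, ((deltaSeq k D τ (2*i) : ℤ) - (deltaSeq k D τ (2*i-1) : ℤ))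
      = ∑ i ∈ Finset.Ioc 0 k, ((deltaSeq k D τ (2*i) : ℤ) - (deltaSeq k D τ (2*i-1) : ℤ)) :=
    Finset.sum_Ioc_consecutive _ (by omega) (by omega)
  have hpeelG1 :
      ∑ i ∈ Finset.Ioc 0 τ, ((deltaSeq k D τ (2*i) : ℤ) - (deltaSeq k D τ (2*i-1) : ℤ))
      = ∑ i ∈ Finset.Ioc 0 (τ-1), ((deltaSeq k D τ (2*i) : ℤ) - (deltaSeq k D τ (2*i-1) : ℤ))
        + ((deltaSeq k D τ (2*τ) : ℤ) - (deltaSeq k D τ (2*τ-1) : ℤ)) := by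
    have h := Finset.sum_Ioc_succ_top (show 0 ≤ τ-1 by omega)
      (fun i => ((deltaSeq k D τ (2*i) : ℤ) - (deltaSeq k D τ (2*i-1) : ℤ)))
    rw [show τ-1+1 = τ from by omega] at h
    exact h
  have hpeelG2 :
      ∑ i ∈ Finset.Ioc τ k, ((deltaSeq k D τ (2*i) : ℤ) - (deltaSeq k D τ (2*i-1) : ℤ))
      = ∑ i ∈ Finset.Ioc τ (k-1), ((deltaSeq k D τ (2*i) : ℤ) - (deltaSeq k D τ (2*i-1) : ℤ))
        + ((deltaSeq k D τ (2*k) : ℤ) - (deltaSeq k D τ (2*k-1) : ℤ)) := by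
    have h := Finset.sum_Ioc_succ_top (show τ ≤ k-1 by omega)
      (fun i => ((deltaSeq k D τ (2*i) : ℤ) - (deltaSeq k D τ (2*i-1) : ℤ)))
    rw [show k-1+1 = k from by omega] at h
    exact h
  have hpeelN1 :
      ∑ i ∈ Finset.Ioc 0 τ, ((nth D (2*i) : ℤ) - (nth D (2*i-1) : ℤ))
      = ∑ i ∈ Finset.Ioc 0 (τ-1), ((nth D (2*i) : ℤ) - (nth D (2*i-1) : ℤ))
        + ((nth D (2*τ) : ℤ) - (nth D (2*τ-1) : ℤ)) := by
    have h := Finset.sum_Ioc_succ_top (show 0 ≤ τ-1 by omega)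
      (fun i => ((nth D (2*i) : ℤ) - (nth D (2*i-1) : ℤ)))
    rw [show τ-1+1 = τ from by omega] at h
    exact h
  have hpeelN2 :
      ∑ i ∈ Finset.Ioc τ k, ((nth D (2*i) : ℤ) - (nth D (2*i-1) : ℤ))
      = ∑ i ∈ Finset.Ioc τ (k-1), ((nth D (2*i) : ℤ) - (nth D (2*i-1) : ℤ))
        + ((nth D (2*k) : ℤ) - (nth D (2*k-1) : ℤ)) := by
    have h := Finset.sum_Ioc_succ_top (show τ ≤ k-1 by omega)
      (fun i => ((nth D (2*i) : ℤ) - (nth D (2*i-1) : ℤ)))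
    rw [show k-1+1 = k from by omega] at h
    exact h
  have hcongr1 :
      ∑ i ∈ Finset.Ioc 0 (τ-1), ((deltaSeq k D τ (2*i) : ℤ) - (deltaSeq k D τ (2*i-1) : ℤ))
      = ∑ i ∈ Finset.Ioc 0 (τ-1), ((nth D (2*i) : ℤ) - (nth D (2*i-1) : ℤ)) := by
    apply Finset.sum_congr rfl
    intro i hi
    rw [Finset.mem_Ioc] at hi
    rw [hδ1 (2*i) (by omega), hδ1 (2*i-1) (by omega)]
  have hGτ : ((deltaSeq k D τ (2*τ) : ℤ) - (deltaSeq k D τ (2*τ-1) : ℤ))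
      = ((nth D (2*τ+1) : ℤ) - (nth D (2*τ-1) : ℤ)) := by
    rw [hδ2 (2*τ) (le_refl _) (by omega), hδ1 (2*τ-1) (by omega)]
  have hcongr2 :
      ∑ i ∈ Finset.Ioc τ (k-1), ((deltaSeq k D τ (2*i) : ℤ) - (deltaSeq k D τ (2*i-1) : ℤ))
      = ∑ i ∈ Finset.Ioc τ (k-1), ((nth D (2*i+1) : ℤ) - (nth D (2*i) : ℤ)) := by
    apply Finset.sum_congr rfl
    intro i hi
    rw [Finset.mem_Ioc] at hi
    rw [hδ2 (2*i) (by omega) (by omega), hδ2 (2*i-1) (by omega) (by omega),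
      show 2*i-1+1 = 2*i from by omega]
  have hGk : ((deltaSeq k D τ (2*k) : ℤ) - (deltaSeq k D τ (2*k-1) : ℤ))
      = ((nth D (2*τ) : ℤ) - (nth D (2*k) : ℤ)) := by
    rw [hδ3, hδ2 (2*k-1) (by omega) (le_refl _), show 2*k-1+1 = 2*k from by omega]
  have hsplit3 :
      ∑ i ∈ Finset.Ioc τ (k-1), ((nth D (2*i+1) : ℤ) - (nth D (2*i) : ℤ))
      = ∑ i ∈ Finset.Ioc τ (k-1), ((nth D (2*i+1) : ℤ) - (nth D (2*i-1) : ℤ))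
        - ∑ i ∈ Finset.Ioc τ (k-1), ((nth D (2*i) : ℤ) - (nth D (2*i-1) : ℤ)) := by
    rw [← Finset.sum_sub_distrib]
    apply Finset.sum_congr rfl
    intro i hi; ring
  have htel :
      ∑ i ∈ Finset.Ioc τ (k-1), ((nth D (2*i+1) : ℤ) - (nth D (2*i-1) : ℤ))
      = (nth D (2*k-1) : ℤ) - (nth D (2*τ+1) : ℤ) := by
    have h := teleSum (fun i => (nth D (2*i-1) : ℤ)) τ (k-1) (by omega)
    rw [show k-1+1 = k from by omega] at h
    rw [show 2*(τ+1)-1 = 2*τ+1 from by omega] at h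
    have hcg :
        ∑ i ∈ Finset.Ioc τ (k-1), ((nth D (2*(i+1)-1) : ℤ) - (nth D (2*i-1) : ℤ))
        = ∑ i ∈ Finset.Ioc τ (k-1), ((nth D (2*i+1) : ℤ) - (nth D (2*i-1) : ℤ)) := by
      apply Finset.sum_congr rfl
      intro i hi
      rw [show 2*(i+1)-1 = 2*i+1 from by omega]
    rw [← hcg]
    exact h
  have hbal' :
      ∑ i ∈ Finset.Ioc 0 τ, ((nth D (2*i) : ℤ) - (nth D (2*i-1) : ℤ))
      = ∑ i ∈ Finset.Ioc τ k, ((nth D (2*i) : ℤ) - (nth D (2*i-1) : ℤ)) := by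
    rw [← hIoc1 τ, ← hIoc2]
    exact hbal
  have hc2k : partialC k D τ (2*k) = 0 := by
    rw [h_pair, hIoc1 k, ← hsplitG, hpeelG1, hpeelG2, hcongr1, hGτ, hcongr2, hGk,
      hsplit3, htel]
    linarith [hbal', hpeelN1, hpeelN2]
  have hclast : partialC k D τ (2*k-1) = -(nth D (2*τ) : ℤ) := by
    have e := hcs (2*k-1)
    rw [show 2*k-1+1 = 2*k from by omega] at e
    have hpw : (-1:ℤ)^(2*k) = 1 := by rw [pow_mul]; norm_num
    rw [hc2k, hpw, hδ3] at e
    linarith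
  -- multiset of edge lengths
  have hedge : Multiset.map
      (fun i => (partialC k D τ i - partialC k D τ ((i + 1) % (2 * k))).natAbs)
      (Multiset.range (2 * k))
      = Multiset.map (fun i => deltaSeq k D τ (i+1)) (Multiset.range (2 * k)) := by
    apply Multiset.map_congr rfl
    intro i hi
    rw [Multiset.mem_range] at hi
    by_cases h : i < 2*k-1
    · rw [Nat.mod_eq_of_lt (by omega)]
      have e : partialC k D τ i - partialC k D τ (i+1)
          = -((-1:ℤ)^(i+1) * (deltaSeq k D τ (i+1) : ℤ)) := by
        rw [hcs i]; ring
      rw [e, Int.natAbs_neg, Int.natAbs_mul, Int.natAbs_pow]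
      simp
    · have hik : i = 2*k-1 := by omega
      subst hik
      rw [show 2*k-1+1 = 2*k from by omega, Nat.mod_self, hc0, hclast, hδ3]
      simp
  have hnth_list : D.val = Multiset.map (fun i => nth D (i+1)) (Multiset.range (2*k)) := by
    have h1 : D.sort (· ≤ ·) = (List.range (2*k)).map (fun i => nth D (i+1)) := by
      apply List.ext_getElem
      · simp [hlen]
      · intro n hn1 hn2
        simp only [List.getElem_map, List.getElem_range]
        unfold nth
        exact (List.getD_eq_getElem _ _ (by omega)).symm
    rw [← Finset.sort_eq D (· ≤ ·), h1]
    exact (Multiset.map_coe (fun i => nth D (i+1)) (List.range (2*k))).symm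
  have hperm : Multiset.map (fun i => deltaSeq k D τ (i+1)) (Multiset.range (2*k))
      = Multiset.map (fun i => nth D (i+1)) (Multiset.range (2*k)) := by
    have hL : (List.range (2*k)).map (fun i => deltaSeq k D τ (i+1))
        = ((List.range (2*τ-1)).map (fun i => nth D (i+1))
            ++ (List.range (2*k-2*τ)).map (fun j => nth D (2*τ+j+1)))
          ++ [nth D (2*τ)] := by
      conv_lhs => rw [show (2*k) = ((2*τ-1) + (2*k-2*τ)) + 1 from by omega,
        List.range_succ, List.range_add]
      rw [List.map_append, List.map_append, List.map_map]
      congr 1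
      · congr 1
        · exact List.map_congr_left (fun x hx => by
            rw [List.mem_range] at hx
            exact hδ1 (x+1) (by omega))
        · refine List.map_congr_left (fun x hx => ?_)
          rw [List.mem_range] at hx
          simp only [Function.comp_apply]
          rw [show 2*τ-1 + x + 1 = 2*τ+x from by omega,
            hδ2 (2*τ+x) (by omega) (by omega)]
      · simp only [List.map_cons, List.map_nil]
        rw [show 2*τ-1 + (2*k-2*τ) + 1 = 2*k from by omega, hδ3]
    have hR : (List.range (2*k)).map (fun i => nth D (i+1))
        = (List.range (2*τ-1)).map (fun i => nth D (i+1))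
          ++ (nth D (2*τ) :: (List.range (2*k-2*τ)).map (fun j => nth D (2*τ+j+1))) := by
      conv_lhs => rw [show (2*k) = (2*τ-1) + ((2*k-2*τ) + 1) from by omega,
        List.range_add]
      rw [List.map_append, List.map_map, List.range_succ_eq_map, List.map_cons, List.map_map]
      congr 1
      congr 1
      refine List.map_congr_left (fun x hx => ?_)
      rw [List.mem_range] at hx
      simp only [Function.comp_apply, Nat.succ_eq_add_one]
      rw [show 2*τ-1 + (x+1) + 1 = 2*τ+x+1 from by omega]
    rw [show Multiset.range (2*k) = ((List.range (2*k) : List ℕ) : Multiset ℕ) from rfl,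
      Multiset.map_coe, Multiset.map_coe, hL, hR, Multiset.coe_eq_coe]
    rw [List.append_assoc]
    exact List.Perm.append_left _ (List.perm_append_singleton _ _)
  refine ⟨hdist, hbound, ?_⟩
  rw [hedge, hperm]
  exact hnth_list.symm
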